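/- For all nonnegative integers n and \ell and real number \alpha, the noncentral Bell numbers satisfy B_\alpha(n+\ell) = \sum_{j=0}^{\ell} \sum_{k=0}^{n} S_\alpha(\ell, j) \binom{n}{k} j^{n-k} B_\alpha(k), where S_\alpha(n,k) are the noncentral Stirling numbers of the second kind and B_\alpha(n) = \sum_{k=0}^n S_\alpha(n,k). -/

import Mathlib

/-- The noncentral Stirling numbers of the second kind, with recurrence factor `k - α`. -/
noncomputable def ncStirling (α : ℝ) : ℕ → ℕ → ℝ
  | 0, 0 => 1
  | 0, _ + 1 => 0
  | n + 1, 0 => (0 - α) * ncStirling α n 0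
  | n + 1, k + 1 => ncStirling α n k + ((k + 1 : ℝ) - α) * ncStirling α n (k + 1)

/-- The noncentral Bell numbers: the sum over k ≤ n of `S_α(n,k)`. -/
noncomputable def ncBell (α : ℝ) (n : ℕ) : ℝ :=
  ∑ k ∈ Finset.range (n + 1), ncStirling α n k

open Finset

lemma ncStirling_eq_zero (α : ℝ) : ∀ n k, n < k → ncStirling α n k = 0
  | 0, k + 1, _ => by simp [ncStirling]
  | n + 1, k + 1, h => by
    rw [ncStirling, ncStirling_eq_zero α n k (by omega),
      ncStirling_eq_zero α n (k + 1) (by omega)]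
    ring

lemma ncBell_zero (α : ℝ) : ncBell α 0 = 1 := by
  simp [ncBell, ncStirling]

/-- Key binomial convolution identity. -/
lemma sumA (f : ℕ → ℝ) (n : ℕ) (x : ℝ) :
    ∑ k ∈ Finset.range (n + 1), (n.choose k : ℝ) * x ^ (n - k) *
        ∑ i ∈ Finset.range (k + 1), (k.choose i : ℝ) * f i
      = ∑ k ∈ Finset.range (n + 1), (n.choose k : ℝ) * (x + 1) ^ (n - k) * f k := by
  have key : ∀ i ∈ Finset.range (n + 1),
      ∑ k ∈ Finset.Ico i (n + 1), (n.choose k : ℝ) * x ^ (n - k) * (k.choose i : ℝ)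
        = (n.choose i : ℝ) * (x + 1) ^ (n - i) := by
    intro i hi
    rw [Finset.mem_range] at hi
    have hi' : i ≤ n := Nat.lt_succ_iff.mp hi
    rw [Finset.sum_Ico_eq_sum_range]
    have hcard : n + 1 - i = (n - i) + 1 := by omega
    rw [hcard]
    have expand : (x + 1) ^ (n - i)
        = ∑ t ∈ Finset.range ((n - i) + 1), x ^ ((n - i) - t) * (((n - i)).choose t : ℝ) := by
      rw [add_pow]
      rw [← Finset.sum_range_reflect]
      apply Finset.sum_congr rfl
      intro t ht
      rw [Finset.mem_range] at ht
      rw [show n - i + 1 - 1 - t = n - i - t from by omega, one_pow, mul_one,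
        Nat.choose_symm (by omega : t ≤ n - i)]
    rw [expand, Finset.mul_sum]
    apply Finset.sum_congr rfl
    intro t ht
    rw [Finset.mem_range] at ht
    have h1 : (n.choose (i + t) : ℝ) * ((i + t).choose i : ℝ)
        = (n.choose i : ℝ) * (((n - i)).choose t : ℝ) := by
      rw [← Nat.cast_mul, ← Nat.cast_mul, Nat.choose_mul (Nat.le_add_right i t),
        show i + t - i = t from by omega]
    have h2 : n - (i + t) = (n - i) - t := by omega
    rw [h2]
    linear_combination x ^ (n - i - t) * h1
  calc
    ∑ k ∈ Finset.range (n + 1), (n.choose k : ℝ) * x ^ (n - k) *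
        ∑ i ∈ Finset.range (k + 1), (k.choose i : ℝ) * f i
      = ∑ k ∈ Finset.range (n + 1), ∑ i ∈ Finset.range (k + 1),
          (n.choose k : ℝ) * x ^ (n - k) * (k.choose i : ℝ) * f i := by
        refine Finset.sum_congr rfl fun k _ => ?_
        rw [Finset.mul_sum]
        exact Finset.sum_congr rfl fun i _ => by ring
    _ = ∑ i ∈ Finset.range (n + 1), ∑ k ∈ Finset.Ico i (n + 1),
          (n.choose k : ℝ) * x ^ (n - k) * (k.choose i : ℝ) * f i := by
        refine Finset.sum_comm' fun k i => ?_
        simp only [Finset.mem_range, Finset.mem_Ico]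
        omega
    _ = ∑ i ∈ Finset.range (n + 1),
          (∑ k ∈ Finset.Ico i (n + 1), (n.choose k : ℝ) * x ^ (n - k) * (k.choose i : ℝ)) * f i := by
        refine Finset.sum_congr rfl fun i _ => ?_
        rw [Finset.sum_mul]
    _ = ∑ k ∈ Finset.range (n + 1), (n.choose k : ℝ) * (x + 1) ^ (n - k) * f k := by
        exact Finset.sum_congr rfl fun i hi => by rw [key i hi]

lemma stir_step (α : ℝ) (ℓ : ℕ) (T : ℕ → ℝ) :
    ∑ j ∈ Finset.range (ℓ + 1 + 1), ncStirling α (ℓ + 1) j * T j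
      = ∑ j ∈ Finset.range (ℓ + 1), ncStirling α ℓ j * (T (j + 1) + ((j : ℝ) - α) * T j) := by
  have expand : ∑ j ∈ Finset.range (ℓ + 1 + 1), ((j : ℝ) - α) * ncStirling α ℓ j * T j
      = (∑ j ∈ Finset.range (ℓ + 1), (((j + 1 : ℕ) : ℝ) - α) * ncStirling α ℓ (j + 1) * T (j + 1))
        + (((0 : ℕ) : ℝ) - α) * ncStirling α ℓ 0 * T 0 := Finset.sum_range_succ' _ _
  have top : ∑ j ∈ Finset.range (ℓ + 1 + 1), ((j : ℝ) - α) * ncStirling α ℓ j * T j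
      = ∑ j ∈ Finset.range (ℓ + 1), ((j : ℝ) - α) * ncStirling α ℓ j * T j := by
    rw [Finset.sum_range_succ, ncStirling_eq_zero α ℓ (ℓ + 1) (by omega)]
    ring
  have lhs1 : ∑ j ∈ Finset.range (ℓ + 1 + 1), ncStirling α (ℓ + 1) j * T j
      = (∑ j ∈ Finset.range (ℓ + 1), ncStirling α (ℓ + 1) (j + 1) * T (j + 1))
        + ncStirling α (ℓ + 1) 0 * T 0 := Finset.sum_range_succ' _ _
  have lhs2 : ∑ j ∈ Finset.range (ℓ + 1), ncStirling α (ℓ + 1) (j + 1) * T (j + 1)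
      = (∑ j ∈ Finset.range (ℓ + 1), ncStirling α ℓ j * T (j + 1))
        + ∑ j ∈ Finset.range (ℓ + 1), (((j + 1 : ℕ) : ℝ) - α) * ncStirling α ℓ (j + 1) * T (j + 1) := by
    rw [← Finset.sum_add_distrib]
    refine Finset.sum_congr rfl fun j _ => ?_
    rw [ncStirling]
    push_cast
    ring
  have rhs1 : ∑ j ∈ Finset.range (ℓ + 1), ncStirling α ℓ j * (T (j + 1) + ((j : ℝ) - α) * T j)
      = (∑ j ∈ Finset.range (ℓ + 1), ncStirling α ℓ j * T (j + 1))
        + ∑ j ∈ Finset.range (ℓ + 1), ((j : ℝ) - α) * ncStirling α ℓ j * T j := by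
    rw [← Finset.sum_add_distrib]
    exact Finset.sum_congr rfl fun j _ => by ring
  have h0 : ncStirling α (ℓ + 1) 0 * T 0 = (((0 : ℕ) : ℝ) - α) * ncStirling α ℓ 0 * T 0 := by
    rw [ncStirling]
    push_cast
    ring
  rw [lhs1, lhs2, rhs1, h0]
  linarith [expand, top]

lemma hRfactor (α : ℝ) (N L : ℕ) :
    (∑ j ∈ Finset.range (L + 1), ∑ k ∈ Finset.range (N + 1),
        ncStirling α L j * (N.choose k : ℝ) * (j : ℝ) ^ (N - k) * ncBell α k)
      = ∑ j ∈ Finset.range (L + 1), ncStirling α L j *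
          ∑ k ∈ Finset.range (N + 1), (N.choose k : ℝ) * (j : ℝ) ^ (N - k) * ncBell α k := by
  refine Finset.sum_congr rfl fun j _ => ?_
  rw [Finset.mul_sum]
  exact Finset.sum_congr rfl fun k _ => by ring

theorem ncBell_spivey (n ℓ : ℕ) (α : ℝ) :
    ncBell α (n + ℓ) =
      ∑ j ∈ Finset.range (ℓ + 1), ∑ k ∈ Finset.range (n + 1),
        ncStirling α ℓ j * (n.choose k : ℝ) * (j : ℝ) ^ (n - k) * ncBell α k := by
  induction n using Nat.strong_induction_on generalizing ℓ with
  | _ n ih =>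
  obtain _ | m := n
  · simp [ncBell_zero, ncBell, ncStirling]
  · -- Bell recurrence from the ℓ = 1 instance of the induction hypothesis
    have hBR : ∀ k, k ≤ m →
        ncBell α (k + 1) = (∑ i ∈ Finset.range (k + 1), (k.choose i : ℝ) * ncBell α i)
          - α * ncBell α k := by
      intro k hk
      have h := ih k (by omega) 1
      rw [Finset.sum_range_succ, Finset.sum_range_one] at h
      have h0 : ∑ i ∈ Finset.range (k + 1),
          ncStirling α 1 0 * (k.choose i : ℝ) * ((0 : ℕ) : ℝ) ^ (k - i) * ncBell α i
            = -(α * ncBell α k) := by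
        rw [Finset.sum_range_succ, Finset.sum_eq_zero, zero_add]
        · simp [ncStirling]
        · intro i hi
          rw [Finset.mem_range] at hi
          rw [Nat.cast_zero, zero_pow (by omega : k - i ≠ 0)]
          ring
      have h1 : ∑ i ∈ Finset.range (k + 1),
          ncStirling α 1 1 * (k.choose i : ℝ) * ((1 : ℕ) : ℝ) ^ (k - i) * ncBell α i
            = ∑ i ∈ Finset.range (k + 1), (k.choose i : ℝ) * ncBell α i := by
        refine Finset.sum_congr rfl fun i _ => ?_
        simp [ncStirling]
      rw [h0, h1] at h
      rw [h]
      ring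
    have hII : ∀ j : ℕ,
        (∑ k ∈ Finset.range (m + 1 + 1), ((m + 1).choose k : ℝ) * (j : ℝ) ^ (m + 1 - k) * ncBell α k)
          = (∑ k ∈ Finset.range (m + 1), (m.choose k : ℝ) * ((j + 1 : ℕ) : ℝ) ^ (m - k) * ncBell α k)
            + ((j : ℝ) - α) *
              ∑ k ∈ Finset.range (m + 1), (m.choose k : ℝ) * (j : ℝ) ^ (m - k) * ncBell α k := by
      intro j
      have split : ∑ k ∈ Finset.range (m + 1 + 1),
            ((m + 1).choose k : ℝ) * (j : ℝ) ^ (m + 1 - k) * ncBell α k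
          = (∑ k ∈ Finset.range (m + 1),
              ((m + 1).choose (k + 1) : ℝ) * (j : ℝ) ^ (m + 1 - (k + 1)) * ncBell α (k + 1))
            + ((m + 1).choose 0 : ℝ) * (j : ℝ) ^ (m + 1 - 0) * ncBell α 0 :=
        Finset.sum_range_succ' _ _
      have e1 : ∑ k ∈ Finset.range (m + 1),
            ((m + 1).choose (k + 1) : ℝ) * (j : ℝ) ^ (m + 1 - (k + 1)) * ncBell α (k + 1)
          = (∑ k ∈ Finset.range (m + 1), (m.choose k : ℝ) * (j : ℝ) ^ (m - k) * ncBell α (k + 1))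
            + ∑ k ∈ Finset.range (m + 1),
                (m.choose (k + 1) : ℝ) * (j : ℝ) ^ (m + 1 - (k + 1)) * ncBell α (k + 1) := by
        rw [← Finset.sum_add_distrib]
        refine Finset.sum_congr rfl fun k hk => ?_
        rw [Nat.choose_succ_succ' m k, show m + 1 - (k + 1) = m - k from by omega]
        push_cast
        ring
      have e2 : (∑ k ∈ Finset.range (m + 1),
            (m.choose (k + 1) : ℝ) * (j : ℝ) ^ (m + 1 - (k + 1)) * ncBell α (k + 1))
            + (m.choose 0 : ℝ) * (j : ℝ) ^ (m + 1 - 0) * ncBell α 0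
          = (j : ℝ) * ∑ k ∈ Finset.range (m + 1),
              (m.choose k : ℝ) * (j : ℝ) ^ (m - k) * ncBell α k := by
        rw [← Finset.sum_range_succ'
          (fun k => (m.choose k : ℝ) * (j : ℝ) ^ (m + 1 - k) * ncBell α k) (m + 1)]
        rw [Finset.sum_range_succ, Nat.choose_succ_self]
        simp only [Nat.cast_zero, zero_mul, add_zero]
        rw [Finset.mul_sum]
        refine Finset.sum_congr rfl fun k hk => ?_
        rw [Finset.mem_range] at hk
        rw [show m + 1 - k = (m - k) + 1 from by omega, pow_succ]
        ring
      have e3 : ∑ k ∈ Finset.range (m + 1), (m.choose k : ℝ) * (j : ℝ) ^ (m - k) * ncBell α (k + 1)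
          = (∑ k ∈ Finset.range (m + 1), (m.choose k : ℝ) * (j : ℝ) ^ (m - k) *
              ∑ i ∈ Finset.range (k + 1), (k.choose i : ℝ) * ncBell α i)
            - α * ∑ k ∈ Finset.range (m + 1),
                (m.choose k : ℝ) * (j : ℝ) ^ (m - k) * ncBell α k := by
        rw [Finset.mul_sum, ← Finset.sum_sub_distrib]
        refine Finset.sum_congr rfl fun k hk => ?_
        rw [Finset.mem_range] at hk
        rw [hBR k (by omega)]
        ring
      have e4 : ∑ k ∈ Finset.range (m + 1),
            (m.choose k : ℝ) * ((j : ℝ) + 1) ^ (m - k) * ncBell α k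
          = ∑ k ∈ Finset.range (m + 1),
              (m.choose k : ℝ) * ((j + 1 : ℕ) : ℝ) ^ (m - k) * ncBell α k := by
        refine Finset.sum_congr rfl fun k _ => ?_
        push_cast
        ring
      have hc0 : ((m + 1).choose 0 : ℝ) * (j : ℝ) ^ (m + 1 - 0) * ncBell α 0
          = (m.choose 0 : ℝ) * (j : ℝ) ^ (m + 1 - 0) * ncBell α 0 := by simp
      rw [split, e1, hc0, add_assoc, e2, e3, sumA (ncBell α) m (j : ℝ), e4]
      ring
    rw [show m + 1 + ℓ = m + (ℓ + 1) from by omega, ih m (by omega) (ℓ + 1),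
      hRfactor α m (ℓ + 1), hRfactor α (m + 1) ℓ,
      stir_step α ℓ
        (fun j => ∑ k ∈ Finset.range (m + 1), (m.choose k : ℝ) * (j : ℝ) ^ (m - k) * ncBell α k)]
    refine Finset.sum_congr rfl fun j _ => ?_
    rw [hII j]
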